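/- Under the setting of the cost functional C(a,b) for a < b, the first-order stationarity conditions ∂C/∂a = 0 and ∂C/∂b = 0 are equivalent to I1(a,b) := ∫ₐᵇ(π1(t) - π1(b))m'(t)dt + (q_d+q_u)/S'(a) = 0 and I2(a,b) := ∫ₐᵇ(π2(t) - π2(a))m'(t)dt + (q_d+q_u)/S'(b) = 0; moreover I1(a,b) - I2(a,b) = (π2(a) - π1(b))·m(a,b), so any stationary pair satisfies π1(b) = π2(a) = C(a,b). -/

import Mathlib

open Real MeasureTheory intervalIntegral

theorem stmt8 (μ c S' m' : ℝ → ℝ)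
    (hS'cont : Continuous S') (hm'cont : Continuous m')
    (hS'pos : ∀ x, 0 < S' x) (hm'pos : ∀ x, 0 < m' x)
    (hccont : Continuous c) (hμcont : Continuous μ)
    (qu qd : ℝ) (hqu : 0 ≤ qu) (hqd : 0 ≤ qd)
    (hcanon : ∀ a b : ℝ, (∫ t in a..b, μ t * m' t) = 1 / S' b - 1 / S' a)
    (π1 π2 : ℝ → ℝ)
    (hπ1 : ∀ x, π1 x = c x + qd * μ x) (hπ2 : ∀ x, π2 x = c x - qu * μ x)
    (m : ℝ → ℝ → ℝ) (hm : ∀ a b, m a b = ∫ t in a..b, m' t)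
    (C : ℝ → ℝ → ℝ)
    (hC : ∀ a b, C a b = (1 / m a b) *
        ((∫ t in a..b, c t * m' t) + qu / S' a + qd / S' b))
    (I1 I2 : ℝ → ℝ → ℝ)
    (hI1 : ∀ a b, I1 a b = (∫ t in a..b, (π1 t - π1 b) * m' t) + (qd + qu) / S' a)
    (hI2 : ∀ a b, I2 a b = (∫ t in a..b, (π2 t - π2 a) * m' t) + (qd + qu) / S' b) :
    ∀ a b : ℝ, a < b →
      ((deriv (fun x => C x b) a = 0 ∧ deriv (fun y => C a y) b = 0) ↔
        (I1 a b = 0 ∧ I2 a b = 0)) ∧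
      I1 a b - I2 a b = (π2 a - π1 b) * m a b ∧
      (I1 a b = 0 → I2 a b = 0 → π1 b = C a b ∧ π2 a = C a b) := by
  intro a b hab
  have hSa : S' a ≠ 0 := (hS'pos a).ne'
  have hSb : S' b ≠ 0 := (hS'pos b).ne'
  have hcm : Continuous fun t => c t * m' t := hccont.mul hm'cont
  have hμm : Continuous fun t => μ t * m' t := hμcont.mul hm'cont
  set Mab := ∫ t in a..b, m' t with hMab
  have hMpos : 0 < Mab :=
    intervalIntegral_pos_of_pos (hm'cont.intervalIntegrable a b) hm'pos hab
  have hMne : Mab ≠ 0 := hMpos.ne'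
  set N := (∫ t in a..b, c t * m' t) + qu / S' a + qd / S' b with hN
  -- I1 expansion
  have e1 : (∫ t in a..b, (π1 t - π1 b) * m' t)
      = (∫ t in a..b, c t * m' t) + qd * (∫ t in a..b, μ t * m' t) - π1 b * Mab := by
    have hrw : ∀ t, (π1 t - π1 b) * m' t
        = c t * m' t + qd * (μ t * m' t) - π1 b * m' t := by
      intro t; rw [hπ1]; ring
    simp_rw [hrw]
    rw [intervalIntegral.integral_sub
        ((hcm.intervalIntegrable a b).add
          ((show Continuous fun t => qd * (μ t * m' t) from continuous_const.mul hμm).intervalIntegrable a b))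
        ((show Continuous fun t => π1 b * m' t from continuous_const.mul hm'cont).intervalIntegrable a b),
      intervalIntegral.integral_add (hcm.intervalIntegrable a b)
        ((show Continuous fun t => qd * (μ t * m' t) from continuous_const.mul hμm).intervalIntegrable a b),
      intervalIntegral.integral_const_mul, intervalIntegral.integral_const_mul]
  have e2 : (∫ t in a..b, (π2 t - π2 a) * m' t)
      = (∫ t in a..b, c t * m' t) - qu * (∫ t in a..b, μ t * m' t) - π2 a * Mab := by
    have hrw : ∀ t, (π2 t - π2 a) * m' t
        = c t * m' t - qu * (μ t * m' t) - π2 a * m' t := by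
      intro t; rw [hπ2]; ring
    simp_rw [hrw]
    rw [intervalIntegral.integral_sub
        ((hcm.intervalIntegrable a b).sub
          ((show Continuous fun t => qu * (μ t * m' t) from continuous_const.mul hμm).intervalIntegrable a b))
        ((show Continuous fun t => π2 a * m' t from continuous_const.mul hm'cont).intervalIntegrable a b),
      intervalIntegral.integral_sub (hcm.intervalIntegrable a b)
        ((show Continuous fun t => qu * (μ t * m' t) from continuous_const.mul hμm).intervalIntegrable a b),
      intervalIntegral.integral_const_mul, intervalIntegral.integral_const_mul]
  have hI1N : I1 a b = N - π1 b * Mab := by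
    rw [hI1, e1, hcanon, hN]; field_simp; ring
  have hI2N : I2 a b = N - π2 a * Mab := by
    rw [hI2, e2, hcanon, hN]; field_simp; ring
  -- derivative in a
  have hmeasA : ∀ f : ℝ → ℝ, Continuous f → StronglyMeasurableAtFilter f (nhds a) :=
    fun f hf => hf.stronglyMeasurableAtFilter _ _
  have hmeasB : ∀ f : ℝ → ℝ, Continuous f → StronglyMeasurableAtFilter f (nhds b) :=
    fun f hf => hf.stronglyMeasurableAtFilter _ _
  have hF3 : HasDerivAt (fun x => ∫ t in x..b, m' t) (-(m' a)) a :=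
    integral_hasDerivAt_left (hm'cont.intervalIntegrable a b)
      (hmeasA _ hm'cont) hm'cont.continuousAt
  have hF1 : HasDerivAt (fun x => ∫ t in x..b, c t * m' t) (-(c a * m' a)) a :=
    integral_hasDerivAt_left (hcm.intervalIntegrable a b) (hmeasA _ hcm) hcm.continuousAt
  have hF2 : HasDerivAt (fun x => ∫ t in x..b, μ t * m' t) (-(μ a * m' a)) a :=
    integral_hasDerivAt_left (hμm.intervalIntegrable a b) (hmeasA _ hμm) hμm.continuousAt
  have hCa : (fun x => (∫ t in x..b, m' t)⁻¹ *
      ((∫ t in x..b, c t * m' t) + qu * (1 / S' b - ∫ t in x..b, μ t * m' t) + qd / S' b))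
      = fun x => C x b := by
    funext x
    rw [hC, hm, hcanon]; ring
  have hinv : HasDerivAt (fun x => (∫ t in x..b, m' t)⁻¹) (-(-(m' a)) / Mab ^ 2) a :=
    hF3.inv hMne
  have hg : HasDerivAt (fun x => (∫ t in x..b, c t * m' t)
      + qu * (1 / S' b - ∫ t in x..b, μ t * m' t) + qd / S' b)
      (-(c a * m' a) + qu * (0 - -(μ a * m' a)) + 0) a :=
    (hF1.add (((hasDerivAt_const a ((1:ℝ) / S' b)).sub hF2).const_mul qu)).add
      (hasDerivAt_const a (qd / S' b))
  have hDa : HasDerivAt (fun x => C x b) (m' a / Mab ^ 2 * I2 a b) a := by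
    have h := hinv.mul hg
    simp only [Pi.mul_def] at h
    rw [hCa] at h
    refine h.congr_deriv ?_
    rw [hI2N, hπ2, hcanon, hN, ← hMab]
    field_simp
    ring
  -- derivative in b
  have hG3 : HasDerivAt (fun y => ∫ t in a..y, m' t) (m' b) b :=
    integral_hasDerivAt_right (hm'cont.intervalIntegrable a b)
      (hmeasB _ hm'cont) hm'cont.continuousAt
  have hG1 : HasDerivAt (fun y => ∫ t in a..y, c t * m' t) (c b * m' b) b :=
    integral_hasDerivAt_right (hcm.intervalIntegrable a b) (hmeasB _ hcm) hcm.continuousAt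
  have hG2 : HasDerivAt (fun y => ∫ t in a..y, μ t * m' t) (μ b * m' b) b :=
    integral_hasDerivAt_right (hμm.intervalIntegrable a b) (hmeasB _ hμm) hμm.continuousAt
  have hCb : (fun y => (∫ t in a..y, m' t)⁻¹ *
      ((∫ t in a..y, c t * m' t) + qu / S' a + qd * (1 / S' a + ∫ t in a..y, μ t * m' t)))
      = fun y => C a y := by
    funext y
    rw [hC, hm, hcanon]; ring
  have hinv' : HasDerivAt (fun y => (∫ t in a..y, m' t)⁻¹) (-(m' b) / Mab ^ 2) b :=
    hG3.inv hMne
  have hg' : HasDerivAt (fun y => (∫ t in a..y, c t * m' t)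
      + qu / S' a + qd * (1 / S' a + ∫ t in a..y, μ t * m' t))
      (c b * m' b + 0 + qd * (0 + μ b * m' b)) b :=
    ((hG1.add (hasDerivAt_const b (qu / S' a))).add
      (((hasDerivAt_const b ((1:ℝ) / S' a)).add hG2).const_mul qd))
  have hDb : HasDerivAt (fun y => C a y) (-(m' b / Mab ^ 2) * I1 a b) b := by
    have h := hinv'.mul hg'
    simp only [Pi.mul_def] at h
    rw [hCb] at h
    refine h.congr_deriv ?_
    rw [hI1N, hπ1, hcanon, hN, ← hMab]
    field_simp
    ring
  have hka : m' a / Mab ^ 2 ≠ 0 :=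
    div_ne_zero (hm'pos a).ne' (pow_ne_zero 2 hMne)
  have hkb : -(m' b / Mab ^ 2) ≠ 0 :=
    neg_ne_zero.2 (div_ne_zero (hm'pos b).ne' (pow_ne_zero 2 hMne))
  refine ⟨⟨fun ⟨h1, h2⟩ => ?_, fun ⟨h1, h2⟩ => ?_⟩, ?_, fun h1 h2 => ?_⟩
  · rw [hDa.deriv] at h1
    rw [hDb.deriv] at h2
    exact ⟨(mul_eq_zero.1 h2).resolve_left hkb, (mul_eq_zero.1 h1).resolve_left hka⟩
  · rw [hDa.deriv, hDb.deriv, h1, h2, mul_zero, mul_zero]; exact ⟨rfl, rfl⟩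
  · rw [hI1N, hI2N, hm]; ring
  · rw [hI1N] at h1
    rw [hI2N] at h2
    have hb1 : π1 b * Mab = N := by linarith
    have hb2 : π2 a * Mab = N := by linarith
    have hCab : C a b = N / Mab := by
      rw [hC, hm, ← hN, ← hMab]; ring
    constructor
    · rw [hCab, ← hb1, mul_div_assoc, div_self hMne, mul_one]
    · rw [hCab, ← hb2, mul_div_assoc, div_self hMne, mul_one]
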